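/- The signed sum over A(n) equals the product of the two determinants on Dodgson's left side, and the signed sum over B(n) ∪ C(n) (with the −1 convention on C(n)) equals the right side; hence the existence of the weight-preserving injection T whose complement in B(n) ∪ C(n) has total weight zero implies Dodgson's identity (Alice). -/

import Mathlib

/- We work with `n + 2` people of each sex (so the number of people is at least 2),
men and women both indexed by `Fin (n+2)`; man `0` is "Mr. 1" and man `Fin.last (n+1)`
is "Mr. n", and similarly for women.

A pair `(π, σ)` of total permutations of `Fin (n+2)` encodes an element of one of the
sets `A(n)`, `B(n)`, `C(n)` of pairs (marriage matching, affair matching) of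
Zeilberger's proof, via dummy values at the unused points:
* `A(n)`: `π` is the marriage matching of all men to all women, and the affair
  matching `{2,…,n-1} → {2',…,(n-1)'}` is encoded by a permutation `σ` fixing the
  endpoints `0` and `last`.
* `B(n)`: the marriage matching `{1,…,n-1} → {1',…,(n-1)'}` is encoded by `π` with the
  dummy value `π last = last`, and the affair matching `{2,…,n} → {2',…,n'}` by `σ`
  with dummy value `σ 0 = 0`.
* `C(n)`: the marriage matching `{1,…,n-1} → {2',…,n'}` is encoded by `π` with dummy
  value `π last = 0`, and the affair matching `{2,…,n} → {1',…,(n-1)'}` by `σ` with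
  dummy value `σ 0 = last`. -/

/-- A pair (marriages, affairs) of permutations. -/
abbrev PairPerm (n : ℕ) := Equiv.Perm (Fin (n + 2)) × Equiv.Perm (Fin (n + 2))

/-- The last index (Mr./Ms. `n`). -/
def lastF (n : ℕ) : Fin (n + 2) := Fin.last (n + 1)

/-- The middle indices `{2,…,n-1}` (people having affairs in `A(n)`). -/
def middleF (n : ℕ) : Finset (Fin (n + 2)) := (Finset.univ.erase 0).erase (lastF n)

/-- Membership in `A(n)`: the affair permutation fixes the two endpoints. -/
def InA {n : ℕ} (p : PairPerm n) : Prop := p.2 0 = 0 ∧ p.2 (lastF n) = lastF n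

/-- Membership in `B(n)`: dummy marriage `n ↦ n'`, dummy affair `1 ↦ 1'`. -/
def InB {n : ℕ} (p : PairPerm n) : Prop := p.1 (lastF n) = lastF n ∧ p.2 0 = 0

/-- Membership in `C(n)`: dummy marriage `n ↦ 1'`, dummy affair `1 ↦ n'`. -/
def InC {n : ℕ} (p : PairPerm n) : Prop := p.1 (lastF n) = 0 ∧ p.2 0 = lastF n

/-- Embedding `Fin n → Fin (n+2)` onto the middle indices `1,…,n`. -/
def midE (n : ℕ) (i : Fin n) : Fin (n + 2) := i.succ.castSucc

/-- Embedding `Fin (n+1) → Fin (n+2)` onto the low indices. -/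
def loE (n : ℕ) (i : Fin (n + 1)) : Fin (n + 2) := i.castSucc

/-- Embedding `Fin (n+1) → Fin (n+2)` onto the high indices. -/
def hiE (n : ℕ) (i : Fin (n + 1)) : Fin (n + 2) := i.succ

/-- The weight of an element of `A(n)`. -/
def wA {n : ℕ} (R : Type) [CommRing R] (A : Matrix (Fin (n + 2)) (Fin (n + 2)) R)
    (p : PairPerm n) : R :=
  ((Equiv.Perm.sign p.1 : ℤ) : R) * ((Equiv.Perm.sign p.2 : ℤ) : R) *
    (∏ i, A i (p.1 i)) * ∏ i ∈ middleF n, A i (p.2 i)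

/-- The weight of an element of `B(n) ∪ C(n)`, with the extra factor `-1` on `C(n)`
(elements of `C(n)` are recognized by the dummy marriage `π (last) = 0`). -/
def wBC {n : ℕ} (R : Type) [CommRing R] (A : Matrix (Fin (n + 2)) (Fin (n + 2)) R)
    (q : PairPerm n) : R :=
  (if q.1 (lastF n) = 0 then (-1 : R) else 1) *
    (((Equiv.Perm.sign q.1 : ℤ) : R) * ((Equiv.Perm.sign q.2 : ℤ) : R) *
      (∏ i ∈ Finset.univ.erase (lastF n), A i (q.1 i)) *
        ∏ i ∈ Finset.univ.erase 0, A i (q.2 i))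

section Aux

private lemma det_eq_sum_row' {m : ℕ} {R : Type} [CommRing R] (M : Matrix (Fin m) (Fin m) R) :
    M.det = ∑ σ : Equiv.Perm (Fin m), ((Equiv.Perm.sign σ : ℤ) : R) * ∏ i, M i (σ i) := by
  rw [← Matrix.det_transpose, Matrix.det_apply']
  simp [Matrix.transpose_apply]

private lemma det_updateRow_basis {m : ℕ} {R : Type} [CommRing R]
    (M : Matrix (Fin (m+1)) (Fin (m+1)) R) (r c : Fin (m+1)) :
    (M.updateRow r (fun j => if j = c then (1:R) else 0)).det
      = (-1)^((r:ℕ)+(c:ℕ)) * (M.submatrix r.succAbove c.succAbove).det := by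
  rw [Matrix.det_succ_row _ r]
  rw [Finset.sum_eq_single c]
  · simp [Matrix.updateRow_self, Matrix.submatrix_updateRow_succAbove, mul_assoc]
  · intro j _ hj
    simp [Matrix.updateRow_self, hj]
  · simp

private lemma lastF_ne_zero (n : ℕ) : lastF n ≠ 0 := by
  simp [lastF, Fin.ext_iff]

private lemma sum_perm_fix {n : ℕ} {R : Type} [CommRing R]
    (A : Matrix (Fin (n+2)) (Fin (n+2)) R) (a b : Fin (n+2)) :
    (∑ σ : Equiv.Perm (Fin (n+2)),
      if σ a = b then ((Equiv.Perm.sign σ : ℤ) : R) * ∏ i ∈ Finset.univ.erase a, A i (σ i) else 0)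
      = (-1)^((a:ℕ)+(b:ℕ)) * (A.submatrix a.succAbove b.succAbove).det := by
  rw [← det_updateRow_basis A a b, det_eq_sum_row']
  refine Finset.sum_congr rfl fun σ _ => ?_
  rw [← Finset.mul_prod_erase Finset.univ _ (Finset.mem_univ a)]
  have hprod : ∏ i ∈ Finset.univ.erase a, (A.updateRow a fun j => if j = b then (1:R) else 0) i (σ i)
      = ∏ i ∈ Finset.univ.erase a, A i (σ i) := by
    refine Finset.prod_congr rfl fun i hi => ?_
    rw [Matrix.updateRow_ne (Finset.mem_erase.mp hi).1]
  rw [hprod, Matrix.updateRow_self]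
  by_cases h : σ a = b
  · simp [h]
  · simp [h]

private lemma sum_perm_fix2 {n : ℕ} {R : Type} [CommRing R]
    (A : Matrix (Fin (n+2)) (Fin (n+2)) R) :
    (∑ σ : Equiv.Perm (Fin (n+2)),
      if σ 0 = 0 ∧ σ (lastF n) = lastF n then
        ((Equiv.Perm.sign σ : ℤ) : R) * ∏ i ∈ middleF n, A i (σ i) else 0)
      = (A.submatrix (midE n) (midE n)).det := by
  classical
  set e0 : Fin (n+2) → R := fun j => if j = 0 then 1 else 0 with he0
  set el : Fin (n+2) → R := fun j => if j = lastF n then 1 else 0 with hel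
  set M : Matrix (Fin (n+2)) (Fin (n+2)) R := (A.updateRow (lastF n) el).updateRow 0 e0 with hM
  have hMdet : (∑ σ : Equiv.Perm (Fin (n+2)),
      if σ 0 = 0 ∧ σ (lastF n) = lastF n then
        ((Equiv.Perm.sign σ : ℤ) : R) * ∏ i ∈ middleF n, A i (σ i) else 0) = M.det := by
    rw [det_eq_sum_row']
    refine Finset.sum_congr rfl fun σ _ => ?_
    have hlmem : lastF n ∈ Finset.univ.erase (0 : Fin (n+2)) :=
      Finset.mem_erase.mpr ⟨lastF_ne_zero n, Finset.mem_univ _⟩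
    rw [← Finset.mul_prod_erase Finset.univ _ (Finset.mem_univ (0 : Fin (n+2))),
      ← Finset.mul_prod_erase _ _ hlmem]
    have h0 : M 0 (σ 0) = e0 (σ 0) := by rw [hM, Matrix.updateRow_self]
    have hl : M (lastF n) (σ (lastF n)) = el (σ (lastF n)) := by
      rw [hM, Matrix.updateRow_ne (lastF_ne_zero n), Matrix.updateRow_self]
    have hmid : ∏ i ∈ middleF n, M i (σ i) = ∏ i ∈ middleF n, A i (σ i) := by
      refine Finset.prod_congr rfl fun i hi => ?_
      have hi' := Finset.mem_erase.mp hi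
      have hi'' := Finset.mem_erase.mp hi'.2
      rw [hM, Matrix.updateRow_ne hi''.1, Matrix.updateRow_ne hi'.1]
    rw [h0, hl]
    show _ = _ * (e0 (σ 0) * (el (σ (lastF n)) * ∏ i ∈ middleF n, M i (σ i)))
    rw [hmid, he0, hel]
    by_cases h : σ 0 = 0 ∧ σ (lastF n) = lastF n
    · rw [if_pos h, h.1, h.2]; simp
    · rw [if_neg h]
      rcases not_and_or.mp h with h1 | h1 <;> simp [h1]
  rw [hMdet, hM]
  have h1 : ((A.updateRow (lastF n) el).updateRow 0 e0).det
      = ((A.updateRow (lastF n) el).submatrix (Fin.succAbove 0) (Fin.succAbove 0)).det := by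
    rw [det_updateRow_basis]
    simp
  rw [h1]
  have h2 : (A.updateRow (lastF n) el).submatrix
        (Fin.succAbove (0 : Fin (n+2))) (Fin.succAbove (0 : Fin (n+2)))
      = (A.submatrix Fin.succ Fin.succ).updateRow (Fin.last n)
          (fun j => if j = Fin.last n then (1:R) else 0) := by
    ext i j
    simp only [Matrix.submatrix_apply, Fin.succAbove_zero]
    by_cases hi : i = Fin.last n
    · subst hi
      rw [Matrix.updateRow_self]
      have : Fin.succ (Fin.last n) = lastF n := by simp [lastF, Fin.succ_last]
      rw [this, Matrix.updateRow_self, hel]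
      by_cases hj : j = Fin.last n
      · subst hj; simp [this]
      · have : Fin.succ j ≠ lastF n := by
          simp only [lastF, ← Fin.succ_last]
          exact fun h => hj (Fin.succ_injective _ h)
        simp [hj, this]
    · have : Fin.succ i ≠ lastF n := by
        simp only [lastF, ← Fin.succ_last]
        exact fun h => hi (Fin.succ_injective _ h)
      rw [Matrix.updateRow_ne hi, Matrix.updateRow_ne this, Matrix.submatrix_apply]
  rw [h2, det_updateRow_basis]
  simp only [Fin.val_last, Fin.succAbove_last, Matrix.submatrix_submatrix]
  have hpow : ((-1 : R))^(n + n) = 1 := by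
    rw [← two_mul]; exact (Even.neg_one_pow ⟨n, by ring⟩)
  rw [hpow, one_mul]
  congr 1 <;> funext i <;> simp [midE, Function.comp, Fin.succ_castSucc]

private lemma loE_eq (n : ℕ) : loE n = Fin.castSucc := rfl
private lemma hiE_eq (n : ℕ) : hiE n = Fin.succ := rfl

private lemma sum_fix_BB {n : ℕ} {R : Type} [CommRing R]
    (A : Matrix (Fin (n+2)) (Fin (n+2)) R) :
    (∑ σ : Equiv.Perm (Fin (n+2)),
      if σ (lastF n) = lastF n then
        ((Equiv.Perm.sign σ : ℤ) : R) * ∏ i ∈ Finset.univ.erase (lastF n), A i (σ i) else 0)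
      = (A.submatrix (loE n) (loE n)).det := by
  rw [sum_perm_fix]
  have : ((-1 : R))^((lastF n : ℕ) + (lastF n : ℕ)) = 1 := by
    rw [← two_mul]; exact (Even.neg_one_pow ⟨_, by ring⟩)
  rw [this, one_mul]
  simp [lastF, Fin.succAbove_last, loE_eq]

private lemma sum_fix_B2 {n : ℕ} {R : Type} [CommRing R]
    (A : Matrix (Fin (n+2)) (Fin (n+2)) R) :
    (∑ σ : Equiv.Perm (Fin (n+2)),
      if σ 0 = 0 then
        ((Equiv.Perm.sign σ : ℤ) : R) * ∏ i ∈ Finset.univ.erase 0, A i (σ i) else 0)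
      = (A.submatrix (hiE n) (hiE n)).det := by
  rw [sum_perm_fix]
  simp [Fin.succAbove_zero, hiE_eq]

private lemma sum_fix_C1 {n : ℕ} {R : Type} [CommRing R]
    (A : Matrix (Fin (n+2)) (Fin (n+2)) R) :
    (∑ σ : Equiv.Perm (Fin (n+2)),
      if σ (lastF n) = 0 then
        ((Equiv.Perm.sign σ : ℤ) : R) * ∏ i ∈ Finset.univ.erase (lastF n), A i (σ i) else 0)
      = (-1)^(n+1) * (A.submatrix (loE n) (hiE n)).det := by
  rw [sum_perm_fix]
  simp [lastF, Fin.succAbove_last, Fin.succAbove_zero, loE_eq, hiE_eq]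

private lemma sum_fix_C2 {n : ℕ} {R : Type} [CommRing R]
    (A : Matrix (Fin (n+2)) (Fin (n+2)) R) :
    (∑ σ : Equiv.Perm (Fin (n+2)),
      if σ 0 = lastF n then
        ((Equiv.Perm.sign σ : ℤ) : R) * ∏ i ∈ Finset.univ.erase 0, A i (σ i) else 0)
      = (-1)^(n+1) * (A.submatrix (hiE n) (loE n)).det := by
  rw [sum_perm_fix]
  simp [lastF, Fin.succAbove_last, Fin.succAbove_zero, loE_eq, hiE_eq]

end Aux

set_option maxHeartbeats 1000000 in
open scoped Classical in
/-- The signed sum over `A(n)` is the left side of Dodgson's identity, the signed sum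
over `B(n) ∪ C(n)` (with the `-1` convention on `C(n)`) is the right side, and hence
the existence of a weight-preserving injection `T : A(n) → B(n) ∪ C(n)` whose
complement has total weight zero implies Dodgson's identity (Alice). -/
theorem dodgson_from_bijection {n : ℕ} (R : Type) [CommRing R]
    (A : Matrix (Fin (n + 2)) (Fin (n + 2)) R) :
    (∑ p ∈ Finset.univ.filter (fun p : PairPerm n => InA p), wA R A p =
        A.det * (A.submatrix (midE n) (midE n)).det) ∧
    (∑ q ∈ Finset.univ.filter (fun q : PairPerm n => InB q ∨ InC q), wBC R A q =
        (A.submatrix (loE n) (loE n)).det * (A.submatrix (hiE n) (hiE n)).det -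
          (A.submatrix (loE n) (hiE n)).det * (A.submatrix (hiE n) (loE n)).det) ∧
    (∀ T : {p : PairPerm n // InA p} → {q : PairPerm n // InB q ∨ InC q},
      Function.Injective T →
      (∀ a, wBC R A (T a).1 = wA R A a.1) →
      (∑ b : {q : PairPerm n // InB q ∨ InC q},
          (if b ∈ Set.range T then 0 else wBC R A b.1)) = 0 →
      A.det * (A.submatrix (midE n) (midE n)).det =
        (A.submatrix (loE n) (loE n)).det * (A.submatrix (hiE n) (hiE n)).det -
          (A.submatrix (loE n) (hiE n)).det * (A.submatrix (hiE n) (loE n)).det) := by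
  have hA : ∑ p ∈ Finset.univ.filter (fun p : PairPerm n => InA p), wA R A p =
      A.det * (A.submatrix (midE n) (midE n)).det := by
    rw [Finset.sum_filter, Fintype.sum_prod_type]
    have key : ∀ π : Equiv.Perm (Fin (n+2)),
        (∑ σ : Equiv.Perm (Fin (n+2)), if InA (π, σ) then wA R A (π, σ) else 0)
        = (((Equiv.Perm.sign π : ℤ) : R) * ∏ i, A i (π i)) *
          ∑ σ : Equiv.Perm (Fin (n+2)), (if σ 0 = 0 ∧ σ (lastF n) = lastF n then
            ((Equiv.Perm.sign σ : ℤ) : R) * ∏ i ∈ middleF n, A i (σ i) else 0) := by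
      intro π
      rw [Finset.mul_sum]
      refine Finset.sum_congr rfl fun σ _ => ?_
      rw [show InA (π, σ) ↔ (σ 0 = 0 ∧ σ (lastF n) = lastF n) from Iff.rfl]
      by_cases h : σ 0 = 0 ∧ σ (lastF n) = lastF n
      · rw [if_pos h, if_pos h]
        unfold wA; simp only; ring
      · rw [if_neg h, if_neg h, mul_zero]
    simp_rw [key]
    rw [← Finset.sum_mul, ← det_eq_sum_row' A, sum_perm_fix2]
  have hBC : ∑ q ∈ Finset.univ.filter (fun q : PairPerm n => InB q ∨ InC q), wBC R A q =
      (A.submatrix (loE n) (loE n)).det * (A.submatrix (hiE n) (hiE n)).det -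
        (A.submatrix (loE n) (hiE n)).det * (A.submatrix (hiE n) (loE n)).det := by
    rw [Finset.sum_filter]
    have split : ∀ p : PairPerm n,
        (if InB p ∨ InC p then wBC R A p else 0)
        = (if p.1 (lastF n) = lastF n then ((Equiv.Perm.sign p.1 : ℤ) : R) *
              ∏ i ∈ Finset.univ.erase (lastF n), A i (p.1 i) else 0) *
          (if p.2 0 = 0 then ((Equiv.Perm.sign p.2 : ℤ) : R) *
              ∏ i ∈ Finset.univ.erase 0, A i (p.2 i) else 0)
          - (if p.1 (lastF n) = 0 then ((Equiv.Perm.sign p.1 : ℤ) : R) *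
              ∏ i ∈ Finset.univ.erase (lastF n), A i (p.1 i) else 0) *
            (if p.2 0 = lastF n then ((Equiv.Perm.sign p.2 : ℤ) : R) *
              ∏ i ∈ Finset.univ.erase 0, A i (p.2 i) else 0) := by
      intro p
      by_cases hB : InB p
      · have h1 : p.1 (lastF n) ≠ 0 := by rw [hB.1]; exact lastF_ne_zero n
        rw [if_pos (Or.inl hB), if_pos hB.1, if_pos hB.2, if_neg h1, zero_mul, sub_zero]
        unfold wBC
        rw [if_neg h1]
        ring
      · by_cases hC : InC p
        · have h1 : p.1 (lastF n) ≠ lastF n := by rw [hC.1]; exact (lastF_ne_zero n).symm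
          rw [if_pos (Or.inr hC), if_neg h1, zero_mul, zero_sub, if_pos hC.1, if_pos hC.2]
          unfold wBC
          rw [if_pos hC.1]
          ring
        · rw [if_neg (by tauto)]
          have h1 : ¬ (p.1 (lastF n) = lastF n ∧ p.2 0 = 0) := fun h => hB h
          have h2 : ¬ (p.1 (lastF n) = 0 ∧ p.2 0 = lastF n) := fun h => hC h
          rcases not_and_or.mp h1 with h | h <;> rcases not_and_or.mp h2 with h' | h' <;>
            rw [if_neg h, if_neg h'] <;> ring
    simp_rw [split]
    rw [Finset.sum_sub_distrib]
    have factor : ∀ f g : Equiv.Perm (Fin (n+2)) → R,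
        (∑ p : PairPerm n, f p.1 * g p.2) = (∑ π, f π) * (∑ σ, g σ) := by
      intro f g
      rw [Fintype.sum_prod_type]
      exact (Finset.sum_mul_sum _ _ _ _).symm
    rw [factor (fun π => if π (lastF n) = lastF n then ((Equiv.Perm.sign π : ℤ) : R) *
          ∏ i ∈ Finset.univ.erase (lastF n), A i (π i) else 0)
        (fun σ => if σ 0 = 0 then ((Equiv.Perm.sign σ : ℤ) : R) *
          ∏ i ∈ Finset.univ.erase 0, A i (σ i) else 0),
      factor (fun π => if π (lastF n) = 0 then ((Equiv.Perm.sign π : ℤ) : R) *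
          ∏ i ∈ Finset.univ.erase (lastF n), A i (π i) else 0)
        (fun σ => if σ 0 = lastF n then ((Equiv.Perm.sign σ : ℤ) : R) *
          ∏ i ∈ Finset.univ.erase 0, A i (σ i) else 0),
      sum_fix_BB, sum_fix_B2, sum_fix_C1, sum_fix_C2]
    have hpow : ((-1 : R))^(n+1) * ((-1 : R))^(n+1) = 1 := by
      rw [← pow_add, ← two_mul]; exact (Even.neg_one_pow ⟨n+1, by ring⟩)
    rw [show ((-1:R))^(n+1) * (A.submatrix (loE n) (hiE n)).det *
        (((-1:R))^(n+1) * (A.submatrix (hiE n) (loE n)).det)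
        = (((-1:R))^(n+1) * ((-1:R))^(n+1)) *
          ((A.submatrix (loE n) (hiE n)).det * (A.submatrix (hiE n) (loE n)).det) by ring,
      hpow, one_mul]
  refine ⟨hA, hBC, ?_⟩
  intro T hinj hw hcomp
  rw [← hA, ← hBC]
  have hAsub : ∑ p ∈ Finset.univ.filter (fun p : PairPerm n => InA p), wA R A p
      = ∑ a : {p : PairPerm n // InA p}, wA R A a.1 :=
    Finset.sum_subtype _ (fun x => by simp) _
  have hBCsub : ∑ q ∈ Finset.univ.filter (fun q : PairPerm n => InB q ∨ InC q), wBC R A q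
      = ∑ b : {q : PairPerm n // InB q ∨ InC q}, wBC R A b.1 :=
    Finset.sum_subtype _ (fun x => by simp) _
  rw [hAsub, hBCsub]
  calc ∑ a : {p : PairPerm n // InA p}, wA R A a.1
      = ∑ a : {p : PairPerm n // InA p}, wBC R A (T a).1 :=
        Finset.sum_congr rfl fun a _ => (hw a).symm
    _ = ∑ b ∈ Finset.univ.filter (fun b => b ∈ Set.range T), wBC R A b.1 := by
        refine Finset.sum_nbij T (fun a _ => ?_) (fun a _ b _ h => hinj h)
          (fun b hb => ?_) (fun a _ => rfl)
        · exact Finset.mem_filter.mpr ⟨Finset.mem_univ _, ⟨a, rfl⟩⟩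
        · obtain ⟨a, ha⟩ := (Finset.mem_filter.mp hb).2
          exact ⟨a, Finset.mem_univ _, ha⟩
    _ = ∑ b : {q : PairPerm n // InB q ∨ InC q}, (if b ∈ Set.range T then wBC R A b.1 else 0) :=
        Finset.sum_filter _ _
    _ = ∑ b : {q : PairPerm n // InB q ∨ InC q}, wBC R A b.1 := by
        have hb : ∀ b : {q : PairPerm n // InB q ∨ InC q}, wBC R A b.1
            = (if b ∈ Set.range T then wBC R A b.1 else 0)
              + (if b ∈ Set.range T then 0 else wBC R A b.1) := by
          intro b
          by_cases h : b ∈ Set.range T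
          · rw [if_pos h, if_pos h, add_zero]
          · rw [if_neg h, if_neg h, zero_add]
        conv_rhs => rw [Finset.sum_congr rfl (fun b _ => hb b)]
        rw [Finset.sum_add_distrib, hcomp, add_zero]
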